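/- Let (α, β) ∈ △ have non-terminating triangle sequence (a₀, a₁, …), and for k ≥ 0 set N_k = a₀ + a₁ + ⋯ + a_k + (k+1). Then for every s > 0 and every k ≥ 0, Z_{N_k}(α, β, s) ≥ (x_{k+1})^s. -/

import Mathlib

open Matrix Filter

noncomputable section

/-- The matrix `A₀` with rows (0,0,1), (1,0,−1), (0,1,0). -/
def A0 : Matrix (Fin 3) (Fin 3) ℝ := !![0,0,1; 1,0,-1; 0,1,0]

/-- The matrix `A₁` with rows (1,0,0), (0,1,0), (−1,0,1). -/
def A1 : Matrix (Fin 3) (Fin 3) ℝ := !![1,0,0; 0,1,0; -1,0,1]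

/-- `Amat 0 = A₀`, `Amat 1 = A₁`. -/
def Amat : Fin 2 → Matrix (Fin 3) (Fin 3) ℝ := ![A0, A1]

/-- The matrix `M` with rows (0,0,1), (0,0,α), (0,0,β). -/
def Mmat (α β : ℝ) : Matrix (Fin 3) (Fin 3) ℝ := !![0,0,1; 0,0,α; 0,0,β]

/-- Hilbert–Schmidt (Hadamard) product `A*B = Tr(A Bᵀ)`. -/
def HS (A B : Matrix (Fin 3) (Fin 3) ℝ) : ℝ := (A * Bᵀ).trace

/-- `A^I = A_{σ₁} A_{σ₂} ⋯ A_{σ_N}` for a state `I = (σ₁,…,σ_N) ∈ {0,1}^N`. -/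
def AI {N : ℕ} (I : Fin N → Fin 2) : Matrix (Fin 3) (Fin 3) ℝ :=
  (List.ofFn fun i => Amat (I i)).prod

/-- The partition function `Z_N(α, β, s) = Σ_{I ∈ 𝒮_N} 1/|M*A^I|^s`. -/
def Z (N : ℕ) (α β s : ℝ) : ℝ :=
  ∑ I : Fin N → Fin 2, 1 / |HS (Mmat α β) (AI I)| ^ s


/-- The triangle `△ = {(x,y) : 1 ≥ x ≥ y > 0}`. -/
def tri : Set (ℝ × ℝ) := {p | 1 ≥ p.1 ∧ p.1 ≥ p.2 ∧ p.2 > 0}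

/-- The subtriangle `△_k = {(x,y) ∈ △ : 1 − x − ky ≥ 0 > 1 − x − (k+1)y}`. -/
def triSub (k : ℕ) : Set (ℝ × ℝ) :=
  {p | p ∈ tri ∧ 1 - p.1 - (k : ℝ) * p.2 ≥ 0 ∧ 0 > 1 - p.1 - ((k : ℝ) + 1) * p.2}

/-- The index `k` with `(x,y) ∈ △_k`, i.e. `⌊(1-x)/y⌋`. -/
def triIndex (p : ℝ × ℝ) : ℤ := ⌊(1 - p.1) / p.2⌋

/-- The triangle map `T`, sending `(α, β) ∈ △_k` to `(β/α, (1 − α − kβ)/α)`. -/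
def T (p : ℝ × ℝ) : ℝ × ℝ :=
  (p.2 / p.1, (1 - p.1 - (triIndex p : ℝ) * p.2) / p.1)

/-- The vectors `C_k` (with indices shifted by 3):
`Cvec a 0 = C₋₃ = (1,0,0)ᵀ`, `Cvec a 1 = C₋₂ = (0,1,0)ᵀ`, `Cvec a 2 = C₋₁ = (0,0,1)ᵀ`,
and `Cvec a (k+3) = C_k = C_{k-3} - C_{k-2} - a_k C_{k-1}` for `k ≥ 0`. -/
def Cvec (a : ℕ → ℕ) : ℕ → Fin 3 → ℝ
  | 0 => ![1, 0, 0]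
  | 1 => ![0, 1, 0]
  | 2 => ![0, 0, 1]
  | (n + 3) => Cvec a n - Cvec a (n + 1) - (a n : ℝ) • Cvec a (n + 2)

/-- `d_k = (1, α, β) · C_k`, with the index shifted by 3: `dvec a α β (k+3) = d_k`. -/
def dvec (a : ℕ → ℕ) (α β : ℝ) (n : ℕ) : ℝ := ![1, α, β] ⬝ᵥ Cvec a n

/-- `X_n = C_n × C_{n+1}`, with the index shifted by 2: `Xvec a (n+2) = X_n`
(`X_n` is defined for `n ≥ -2`). -/
def Xvec (a : ℕ → ℕ) (n : ℕ) : Fin 3 → ℝ :=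
  crossProduct (Cvec a (n + 1)) (Cvec a (n + 2))


section Aux

variable (a : ℕ → ℕ) (α β : ℝ)

lemma Cvec_succ (n : ℕ) :
    Cvec a (n + 3) = Cvec a n - Cvec a (n + 1) - (a n : ℝ) • Cvec a (n + 2) := rfl

lemma dvec_rec (n : ℕ) :
    dvec a α β (n + 3) = dvec a α β n - dvec a α β (n + 1) - (a n : ℝ) * dvec a α β (n + 2) := by
  simp only [dvec, Cvec_succ, dotProduct, Fin.sum_univ_three, Pi.sub_apply, Pi.smul_apply,
    smul_eq_mul]
  ring

lemma dvec_zero : dvec a α β 0 = 1 := by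
  simp [dvec, Cvec, dotProduct, Fin.sum_univ_three]

lemma dvec_one : dvec a α β 1 = α := by
  simp [dvec, Cvec, dotProduct, Fin.sum_univ_three]

lemma dvec_two : dvec a α β 2 = β := by
  simp [dvec, Cvec, dotProduct, Fin.sum_univ_three]

lemma Xvec_fst (n : ℕ) :
    Xvec a n 0 = Cvec a (n + 1) 1 * Cvec a (n + 2) 2 - Cvec a (n + 1) 2 * Cvec a (n + 2) 1 := by
  simp [Xvec, crossProduct]

lemma Xvec_fst_zero : Xvec a 0 0 = 1 := by
  simp [Xvec_fst, Cvec]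

lemma Xvec_fst_one : Xvec a 1 0 = 1 := by
  simp [Xvec_fst, Cvec_succ, Cvec]

lemma Xvec_fst_two : Xvec a 2 0 = 1 + a 0 := by
  show Xvec a (0 + 2) 0 = 1 + a 0
  rw [Xvec_fst]
  show Cvec a (0 + 3) 1 * Cvec a (1 + 3) 2 - Cvec a (0 + 3) 2 * Cvec a (1 + 3) 1 = 1 + a 0
  simp only [Cvec_succ, Pi.sub_apply, Pi.smul_apply, smul_eq_mul]
  simp [Cvec]
  ring

lemma Xvec_fst_rec (n : ℕ) :
    Xvec a (n + 3) 0 = Xvec a (n + 2) 0 + (a (n + 1) : ℝ) * Xvec a (n + 1) 0 + Xvec a n 0 := by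
  simp only [Xvec_fst]
  have h4 : Cvec a (n + 4) = Cvec a (n + 1) - Cvec a (n + 2) - (a (n + 1) : ℝ) • Cvec a (n + 3) :=
    Cvec_succ a (n + 1)
  have h5 : Cvec a (n + 5) = Cvec a (n + 2) - Cvec a (n + 3) - (a (n + 2) : ℝ) • Cvec a (n + 4) :=
    Cvec_succ a (n + 2)
  rw [h5] at *
  rw [h4]
  simp only [Pi.sub_apply, Pi.smul_apply, smul_eq_mul]
  ring


lemma Xvec_fst_nonneg (n : ℕ) : 0 ≤ Xvec a n 0 := by
  have key : ∀ m : ℕ, 0 ≤ Xvec a m 0 ∧ 0 ≤ Xvec a (m + 1) 0 ∧ 0 ≤ Xvec a (m + 2) 0 := by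
    intro m
    induction m with
    | zero =>
      refine ⟨by rw [Xvec_fst_zero]; norm_num, by rw [Xvec_fst_one]; norm_num, ?_⟩
      rw [Xvec_fst_two]; positivity
    | succ m ih =>
      obtain ⟨h0, h1, h2⟩ := ih
      refine ⟨h1, h2, ?_⟩
      rw [Xvec_fst_rec]
      have : (0:ℝ) ≤ (a (m + 1) : ℝ) := Nat.cast_nonneg _
      nlinarith
  exact (key n).1

lemma orbit (hseq : ∀ n : ℕ, T^[n] (α, β) ∈ triSub (a n)) :
    ∀ n : ℕ, 0 < dvec a α β n ∧
      T^[n] (α, β) = (dvec a α β (n + 1) / dvec a α β n, dvec a α β (n + 2) / dvec a α β n) := by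
  intro n
  induction n with
  | zero =>
    refine ⟨by rw [dvec_zero]; norm_num, ?_⟩
    simp [dvec_zero, dvec_one, dvec_two]
  | succ n ih =>
    obtain ⟨hdn, horb⟩ := ih
    have hmem := hseq n
    rw [horb] at hmem
    obtain ⟨⟨hle1, hle2, hpos⟩, hge, hlt⟩ := hmem
    simp only at hle1 hle2 hpos hge hlt
    have hdn' : dvec a α β n ≠ 0 := ne_of_gt hdn
    have hd1 : 0 < dvec a α β (n + 1) := by
      have h : 0 < dvec a α β (n + 1) / dvec a α β n := lt_of_lt_of_le hpos hle2
      have := mul_pos h hdn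
      rwa [div_mul_cancel₀ _ hdn'] at this
    have hd1' : dvec a α β (n + 1) ≠ 0 := ne_of_gt hd1
    refine ⟨hd1, ?_⟩
    rw [Function.iterate_succ_apply', horb]
    have hidx : triIndex (dvec a α β (n + 1) / dvec a α β n, dvec a α β (n + 2) / dvec a α β n)
        = (a n : ℤ) := by
      rw [triIndex]
      apply Int.floor_eq_iff.mpr
      have hy : (0:ℝ) < dvec a α β (n + 2) / dvec a α β n := hpos
      constructor
      · push_cast
        rw [le_div_iff₀ hy]
        linarith
      · push_cast
        rw [div_lt_iff₀ hy]
        linarith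
    rw [T, hidx]
    have hrec := dvec_rec a α β n
    have hx : dvec a α β (n + 1) / dvec a α β n ≠ 0 := by positivity
    simp only
    rw [Prod.ext_iff]
    constructor
    · simp only
      field_simp
    · simp only
      push_cast
      field_simp
      rw [hrec]


lemma key_identity (k : ℕ) :
    Xvec a (k + 3) 0 * dvec a α β (k + 3)
      + (Xvec a (k + 1) 0 + (a (k + 2) : ℝ) * Xvec a (k + 2) 0) * dvec a α β (k + 4)
      + Xvec a (k + 2) 0 * dvec a α β (k + 5) = 1 := by
  induction k with
  | zero =>
    have e3 : dvec a α β 3 = 1 - α - (a 0 : ℝ) * β := by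
      have h := dvec_rec a α β 0
      rw [dvec_zero, dvec_one, dvec_two] at h
      exact h
    have e4 : dvec a α β 4 = α - β - (a 1 : ℝ) * dvec a α β 3 := by
      have h := dvec_rec a α β 1
      rw [dvec_one, dvec_two] at h
      exact h
    have e5 : dvec a α β 5 = β - dvec a α β 3 - (a 2 : ℝ) * dvec a α β 4 := by
      have h := dvec_rec a α β 2
      rw [dvec_two] at h
      exact h
    have x3 : Xvec a 3 0 = (1 + (a 0 : ℝ)) + (a 1 : ℝ) * 1 + 1 := by
      have h := Xvec_fst_rec a 0
      rw [Xvec_fst_two, Xvec_fst_one, Xvec_fst_zero] at h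
      exact h
    show Xvec a 3 0 * dvec a α β 3
      + (Xvec a 1 0 + (a 2 : ℝ) * Xvec a 2 0) * dvec a α β 4
      + Xvec a 2 0 * dvec a α β 5 = 1
    rw [x3, Xvec_fst_one, Xvec_fst_two, e5, e4, e3]
    ring
  | succ k ih =>
    show Xvec a (k + 4) 0 * dvec a α β (k + 4)
      + (Xvec a (k + 2) 0 + (a (k + 3) : ℝ) * Xvec a (k + 3) 0) * dvec a α β (k + 5)
      + Xvec a (k + 3) 0 * dvec a α β (k + 6) = 1
    have hx : Xvec a (k + 4) 0
        = Xvec a (k + 3) 0 + (a (k + 2) : ℝ) * Xvec a (k + 2) 0 + Xvec a (k + 1) 0 :=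
      Xvec_fst_rec a (k + 1)
    have hd : dvec a α β (k + 6)
        = dvec a α β (k + 3) - dvec a α β (k + 4) - (a (k + 3) : ℝ) * dvec a α β (k + 5) :=
      dvec_rec a α β (k + 3)
    rw [hx, hd]
    linear_combination ih

lemma xd_le_one (hseq : ∀ n : ℕ, T^[n] (α, β) ∈ triSub (a n)) (k : ℕ) :
    Xvec a (k + 3) 0 * dvec a α β (k + 3) ≤ 1 := by
  have h := key_identity a α β k
  have h4 : 0 < dvec a α β (k + 4) := (orbit a α β hseq (k + 4)).1
  have h5 : 0 < dvec a α β (k + 5) := (orbit a α β hseq (k + 5)).1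
  have x1 := Xvec_fst_nonneg a (k + 1)
  have x2 := Xvec_fst_nonneg a (k + 2)
  have ha : (0:ℝ) ≤ (a (k + 2) : ℝ) := Nat.cast_nonneg _
  nlinarith [mul_nonneg (add_nonneg x1 (mul_nonneg ha x2)) h4.le, mul_nonneg x2 h5.le]


/-- The word `A₁^{a₀} A₀ A₁^{a₁} A₀ ⋯ A₁^{a_k} A₀` as a list of symbols. -/
def word (a : ℕ → ℕ) : ℕ → List (Fin 2)
  | 0 => List.replicate (a 0) 1 ++ [0]
  | (k + 1) => word a k ++ (List.replicate (a (k + 1)) 1 ++ [0])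

lemma word_length (k : ℕ) :
    (word a k).length = (∑ j ∈ Finset.range (k + 1), a j) + (k + 1) := by
  induction k with
  | zero => simp [word]
  | succ k ih =>
    rw [word, List.length_append, ih, Finset.sum_range_succ a (k + 1)]
    simp
    omega

/-- Matrix with columns `C_{k-2}, C_{k-1}, C_k`. -/
def Wmat (a : ℕ → ℕ) (k : ℕ) : Matrix (Fin 3) (Fin 3) ℝ :=
  Matrix.of fun i j => Cvec a (k + 1 + (j : ℕ)) i

lemma A1_pow (b : ℕ) : A1 ^ b = !![1,0,0; 0,1,0; -(b:ℝ),0,1] := by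
  induction b with
  | zero =>
    rw [pow_zero]
    ext i j
    fin_cases i <;> fin_cases j <;>
      simp [Matrix.one_apply, Matrix.vecHead, Matrix.vecTail]
  | succ b ih =>
    rw [pow_succ, ih, A1]
    ext i j
    fin_cases i <;> fin_cases j <;>
      simp [Matrix.mul_apply, Fin.sum_univ_three] <;> push_cast <;> ring

lemma A1_pow_mul_A0 (b : ℕ) : A1 ^ b * A0 = !![0,0,1; 1,0,-1; 0,1,-(b:ℝ)] := by
  rw [A1_pow, A0]
  ext i j
  fin_cases i <;> fin_cases j <;>
    simp [Matrix.mul_apply, Fin.sum_univ_three]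

lemma block_prod (b : ℕ) :
    ((List.replicate b (1 : Fin 2) ++ [0]).map Amat).prod = A1 ^ b * A0 := by
  have h1 : Amat 1 = A1 := rfl
  have h0 : Amat 0 = A0 := rfl
  rw [List.map_append, List.prod_append, List.map_replicate, List.prod_replicate, h1]
  simp [h0]

lemma Cvec_three : Cvec a 3 = ![(1:ℝ), -1, -(a 0 : ℝ)] := by
  show Cvec a (0 + 3) = _
  rw [Cvec_succ]
  ext i
  fin_cases i <;> simp [Cvec]

lemma Wmat_zero : A1 ^ (a 0) * A0 = Wmat a 0 := by
  rw [A1_pow_mul_A0]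
  ext i j
  fin_cases i <;> fin_cases j <;>
    norm_num [Wmat, Cvec, Cvec_three]

lemma Wmat_succ (k : ℕ) : Wmat a k * (A1 ^ (a (k + 1)) * A0) = Wmat a (k + 1) := by
  rw [A1_pow_mul_A0]
  have h : Cvec a (k + 4) = Cvec a (k + 1) - Cvec a (k + 2) - (a (k + 1) : ℝ) • Cvec a (k + 3) :=
    Cvec_succ a (k + 1)
  ext i j
  fin_cases j <;>
    simp [Wmat, Matrix.mul_apply, Fin.sum_univ_three, h, Matrix.vecHead, Matrix.vecTail,
      show k + 1 + 1 = k + 2 from rfl, show k + 1 + 2 = k + 3 from rfl,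
      show k + 2 + 2 = k + 4 from rfl, show k + 1 + 1 + 2 = k + 4 from rfl] <;> ring

lemma word_prod (k : ℕ) : ((word a k).map Amat).prod = Wmat a k := by
  induction k with
  | zero => rw [word, block_prod, Wmat_zero]
  | succ k ih =>
    rw [word, List.map_append, List.prod_append, ih, block_prod, Wmat_succ]

lemma HS_Wmat (k : ℕ) : HS (Mmat α β) (Wmat a k) = dvec a α β (k + 3) := by
  show (Mmat α β * (Wmat a k)ᵀ).trace = _
  simp [Mmat, Wmat, Matrix.trace, Matrix.mul_apply, Fin.sum_univ_three, dvec, dotProduct,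
    Matrix.transpose_apply, Matrix.diag, Matrix.vecMul, Matrix.vecHead, Matrix.vecTail,
    show k + 1 + 2 = k + 3 from rfl]

end Aux

/-- If `(α, β) ∈ △` has non-terminating triangle sequence `(a₀, a₁, …)` and
`N_k = a₀ + ⋯ + a_k + (k+1)`, then for every `s > 0` and `k ≥ 0`,
`Z_{N_k}(α, β, s) ≥ (x_{k+1})^s` (here `Xvec a (k+3) 0 = x_{k+1}`). -/
theorem Z_ge_x_pow (α β : ℝ) (a : ℕ → ℕ)
    (hseq : ∀ n : ℕ, T^[n] (α, β) ∈ triSub (a n)) :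
    ∀ s : ℝ, 0 < s → ∀ k : ℕ,
      (Xvec a (k + 3) 0) ^ s ≤ Z ((∑ j ∈ Finset.range (k + 1), a j) + (k + 1)) α β s := by
  intro s hs k
  rw [← word_length a k]
  have hd : 0 < dvec a α β (k + 3) := (orbit a α β hseq (k + 3)).1
  have hx0 : 0 ≤ Xvec a (k + 3) 0 := Xvec_fst_nonneg a (k + 3)
  have hle : Xvec a (k + 3) 0 ≤ 1 / dvec a α β (k + 3) := by
    rw [le_div_iff₀ hd]
    exact xd_le_one a α β hseq k
  have mono : Xvec a (k + 3) 0 ^ s ≤ (1 / dvec a α β (k + 3)) ^ s :=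
    Real.rpow_le_rpow hx0 hle hs.le
  refine mono.trans ?_
  set L := word a k with hL
  set I : Fin L.length → Fin 2 := L.get with hI
  have hAI : AI I = Wmat a k := by
    rw [AI]
    have h1 : (List.ofFn fun i => Amat (I i)) = L.map Amat := by
      rw [hI]
      rw [show (fun i => Amat (L.get i)) = Amat ∘ L.get from rfl, ← List.map_ofFn, List.ofFn_get]
    rw [h1, word_prod]
  have hHS : HS (Mmat α β) (AI I) = dvec a α β (k + 3) := by
    rw [hAI, HS_Wmat]
  have hterm : (1 / dvec a α β (k + 3)) ^ s = 1 / |HS (Mmat α β) (AI I)| ^ s := by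
    rw [hHS, abs_of_pos hd, Real.div_rpow (by norm_num) hd.le, Real.one_rpow]
  rw [hterm]
  exact Finset.single_le_sum (f := fun J : Fin L.length → Fin 2 => 1 / |HS (Mmat α β) (AI J)| ^ s)
    (fun J _ => by positivity) (Finset.mem_univ I)

end
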